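/- Let I be the left ideal of R<x,x*> generated by a homogeneous polynomial p that contains no term (word) containing a factor x_i x_i* or x_i* x_i for any i. Then I is real. -/

import Mathlib

open scoped BigOperators

noncomputable section

/-- The free real *-algebra on `g` variables `x₁,…,x_g` and their formal adjoints
`x₁*,…,x_g*`, modeled as the monoid algebra of the free monoid on `2g` letters,
where `Sum.inl i` is `xᵢ` and `Sum.inr i` is `xᵢ*`. -/
abbrev FreeStarAlg (g : ℕ) := MonoidAlgebra ℝ (FreeMonoid (Fin g ⊕ Fin g))

namespace FreeStarAlg

variable {g : ℕ}

/-- The involution on words: reverse the word and star each letter. -/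
def starWord (w : FreeMonoid (Fin g ⊕ Fin g)) : FreeMonoid (Fin g ⊕ Fin g) :=
  FreeMonoid.ofList (((FreeMonoid.toList w).map Sum.swap).reverse)

/-- The involution `p ↦ p*` on the free *-algebra. -/
def starP (p : FreeStarAlg g) : FreeStarAlg g :=
  MonoidAlgebra.ofCoeff (Finsupp.mapDomain starWord p.coeff)

/-- The monomial corresponding to a word. -/
def mono (w : FreeMonoid (Fin g ⊕ Fin g)) : FreeStarAlg g :=
  MonoidAlgebra.single w 1

/-- Degree of a noncommutative polynomial. -/
def deg (p : FreeStarAlg g) : ℕ :=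
  p.coeff.support.sup fun w => (FreeMonoid.toList w).length

/-- `p` is homogeneous of degree `d`: every word appearing in `p` has length `d`. -/
def IsHom (d : ℕ) (p : FreeStarAlg g) : Prop :=
  ∀ w ∈ p.coeff.support, (FreeMonoid.toList w).length = d

/-- `p` is a (finite) sum of hermitian squares `qᵢ* qᵢ`. -/
def IsSOS (p : FreeStarAlg g) : Prop :=
  ∃ (k : ℕ) (q : Fin k → FreeStarAlg g), p = ∑ i, starP (q i) * q i

/-- Membership in `I + I*`. -/
def MemIplusIstar (I : Submodule (FreeStarAlg g) (FreeStarAlg g)) (p : FreeStarAlg g) : Prop :=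
  ∃ u ∈ I, ∃ v ∈ I, p = u + starP v

/-- A left ideal `I` is real if `∑ aᵢ* aᵢ ∈ I + I*` forces every `aᵢ ∈ I`. -/
def IsRealIdeal (I : Submodule (FreeStarAlg g) (FreeStarAlg g)) : Prop :=
  ∀ (r : ℕ) (a : Fin r → FreeStarAlg g),
    MemIplusIstar I (∑ i, starP (a i) * a i) → ∀ i, a i ∈ I

/-- The left ideal generated by a set `S`. -/
def leftIdealGen (S : Set (FreeStarAlg g)) : Submodule (FreeStarAlg g) (FreeStarAlg g) :=
  Submodule.span (FreeStarAlg g) S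

/-- `p` is irreducible: it cannot be written as a product of two polynomials of
strictly smaller degree. -/
def Irred (p : FreeStarAlg g) : Prop :=
  ¬ ∃ q r : FreeStarAlg g, p = q * r ∧ deg q < deg p ∧ deg r < deg p

/-- `p` is analytic: it contains no starred variables. -/
def IsAnalytic (p : FreeStarAlg g) : Prop :=
  ∀ w ∈ p.coeff.support, ∀ l ∈ FreeMonoid.toList w, l.isLeft

end FreeStarAlg

open FreeStarAlg

namespace Stmt8Aux

open FreeStarAlg FreeMonoid

variable {g : ℕ}

abbrev X (g : ℕ) := Fin g ⊕ Fin g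

instance : CoeFun (FreeStarAlg g) (fun _ => FreeMonoid (X g) → ℝ) := ⟨fun f => f.coeff⟩

@[simp] lemma toList_starWord (w : FreeMonoid (X g)) :
    toList (starWord w) = ((toList w).map Sum.swap).reverse := by
  simp [starWord]

@[simp] lemma length_starWord (w : FreeMonoid (X g)) :
    (toList (starWord w)).length = (toList w).length := by simp

@[simp] lemma starWord_starWord (w : FreeMonoid (X g)) : starWord (starWord w) = w := by
  apply FreeMonoid.toList.injective
  simp [List.map_reverse, Function.comp]

lemma starWord_injective : Function.Injective (starWord (g := g)) :=
  Function.Involutive.injective starWord_starWord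

lemma starWord_mul (u v : FreeMonoid (X g)) :
    starWord (u * v) = starWord v * starWord u := by
  apply FreeMonoid.toList.injective
  simp

lemma starWord_ofList (l : List (X g)) :
    starWord (ofList l) = ofList ((l.map Sum.swap).reverse) := by
  apply FreeMonoid.toList.injective
  simp

/-- `starP` as an additive monoid hom. -/
def starPHom : FreeStarAlg g →+ FreeStarAlg g :=
  (MonoidAlgebra.coeffAddEquiv.symm.toAddMonoidHom.comp
    (Finsupp.mapDomain.addMonoidHom starWord)).comp MonoidAlgebra.coeffAddEquiv.toAddMonoidHom

lemma starP_eq_hom (f : FreeStarAlg g) : starP f = starPHom f := rfl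

@[simp] lemma starP_apply (f : FreeStarAlg g) (w : FreeMonoid (X g)) :
    starP f w = f (starWord w) := by
  conv_lhs => rw [← starWord_starWord w]
  exact Finsupp.mapDomain_apply starWord_injective f.coeff (starWord w)

@[simp] lemma starP_single (w : FreeMonoid (X g)) (c : ℝ) :
    starP (MonoidAlgebra.single w c) = MonoidAlgebra.single (starWord w) c := by
  unfold starP; exact congrArg MonoidAlgebra.ofCoeff Finsupp.mapDomain_single

@[simp] lemma starP_zero : starP (0 : FreeStarAlg g) = 0 := by
  simp only [starP_eq_hom, map_zero]

@[simp] lemma starP_add (f h : FreeStarAlg g) : starP (f + h) = starP f + starP h := by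
  simp only [starP_eq_hom, map_add]

@[simp] lemma starP_sub (f h : FreeStarAlg g) : starP (f - h) = starP f - starP h := by
  simp only [starP_eq_hom, map_sub]

@[simp] lemma starP_neg (f : FreeStarAlg g) : starP (-f) = - starP f := by
  simp only [starP_eq_hom, map_neg]

@[simp] lemma starP_starP (f : FreeStarAlg g) : starP (starP f) = f := by
  ext w; simp

@[simp] lemma starP_sum {ι : Type*} (s : Finset ι) (f : ι → FreeStarAlg g) :
    starP (∑ i ∈ s, f i) = ∑ i ∈ s, starP (f i) := by
  simp only [starP_eq_hom, map_sum]

@[simp] lemma starP_add' (f h : FreeStarAlg g) :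
    starP (f + h) = starP f + starP h :=
  starP_add f h

lemma starP_mul (f h : FreeStarAlg g) : starP (f * h) = starP h * starP f := by
  induction f using MonoidAlgebra.induction_linear with
  | zero => simp
  | add f₁ f₂ h1 h2 => simp [add_mul, h1, h2, starP_add, starP_add', mul_add]
  | single w c =>
    induction h using MonoidAlgebra.induction_linear with
    | zero => simp
    | add h₁ h₂ k1 k2 => simp [mul_add, k1, k2, starP_add, starP_add', add_mul]
    | single v e =>
      rw [MonoidAlgebra.single_mul_single, starP_single, starP_single, starP_single,
        MonoidAlgebra.single_mul_single, starWord_mul, mul_comm]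

end Stmt8Aux

namespace Stmt8Aux

open FreeStarAlg FreeMonoid

variable {g : ℕ}

instance : DecidableEq (FreeMonoid (X g)) :=
  fun a b => decidable_of_iff (FreeMonoid.toList a = FreeMonoid.toList b)
    FreeMonoid.toList.injective.eq_iff

lemma apply_eq_sum_ite (f : FreeStarAlg g) (w : FreeMonoid (X g)) :
    f w = ∑ a ∈ f.coeff.support, if a = w then f a else 0 := by
  rw [Finset.sum_ite_eq' f.coeff.support w f.coeff]
  by_cases hw : w ∈ f.coeff.support
  · rw [if_pos hw]
  · rw [if_neg hw]; exact (Finsupp.notMem_support_iff.1 hw)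

lemma key_sum_ite (a b z : FreeMonoid (X g)) (c : ℝ) :
    ∑ j ∈ Finset.range ((toList z).length + 1),
      (if a = ofList ((toList z).take j) ∧ b = ofList ((toList z).drop j) then c else 0)
      = if a * b = z then c else 0 := by
  by_cases hab : a * b = z
  · rw [if_pos hab]
    have hz : toList z = toList a ++ toList b := by rw [← hab, toList_mul]
    have hlen : (toList a).length ≤ (toList z).length := by rw [hz]; simp
    rw [Finset.sum_eq_single_of_mem (toList a).length
      (Finset.mem_range.2 (by omega))]
    · rw [if_pos]
      constructor
      · apply FreeMonoid.toList.injective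
        rw [toList_ofList, hz, List.take_left]
      · apply FreeMonoid.toList.injective
        rw [toList_ofList, hz, List.drop_left]
    · intro j hj hne
      rw [if_neg]
      rintro ⟨ha, -⟩
      apply hne
      have : toList a = (toList z).take j := by rw [ha, toList_ofList]
      rw [this, List.length_take]
      have := Finset.mem_range.1 hj
      omega
  · rw [if_neg hab]
    apply Finset.sum_eq_zero
    intro j hj
    rw [if_neg]
    rintro ⟨ha, hb⟩
    apply hab
    apply FreeMonoid.toList.injective
    rw [toList_mul, ha, hb, toList_ofList, toList_ofList, List.take_append_drop]

lemma mul_apply_splits (f h : FreeStarAlg g) (z : FreeMonoid (X g)) :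
    (f * h) z = ∑ j ∈ Finset.range ((toList z).length + 1),
      f (ofList ((toList z).take j)) * h (ofList ((toList z).drop j)) := by
  rw [MonoidAlgebra.coeff_mul]
  calc (f.coeff.sum fun a₁ b₁ => h.coeff.sum fun a₂ b₂ => if a₁ * a₂ = z then b₁ * b₂ else 0)
      = ∑ a ∈ f.coeff.support, ∑ b ∈ h.coeff.support, if a * b = z then f a * h b else 0 := rfl
    _ = ∑ a ∈ f.coeff.support, ∑ b ∈ h.coeff.support, ∑ j ∈ Finset.range ((toList z).length + 1),
          (if a = ofList ((toList z).take j) ∧ b = ofList ((toList z).drop j)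
            then f a * h b else 0) := by
        exact Finset.sum_congr rfl fun a _ => Finset.sum_congr rfl fun b _ =>
          (key_sum_ite a b z _).symm
    _ = ∑ a ∈ f.coeff.support, ∑ j ∈ Finset.range ((toList z).length + 1), ∑ b ∈ h.coeff.support,
          (if a = ofList ((toList z).take j) ∧ b = ofList ((toList z).drop j)
            then f a * h b else 0) :=
        Finset.sum_congr rfl fun a _ => Finset.sum_comm
    _ = ∑ j ∈ Finset.range ((toList z).length + 1), ∑ a ∈ f.coeff.support, ∑ b ∈ h.coeff.support,
          (if a = ofList ((toList z).take j) ∧ b = ofList ((toList z).drop j)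
            then f a * h b else 0) :=
        Finset.sum_comm
    _ = ∑ j ∈ Finset.range ((toList z).length + 1),
          f (ofList ((toList z).take j)) * h (ofList ((toList z).drop j)) := by
        refine Finset.sum_congr rfl fun j _ => ?_
        rw [apply_eq_sum_ite f (ofList ((toList z).take j)),
          apply_eq_sum_ite h (ofList ((toList z).drop j)), Finset.sum_mul_sum]
        refine Finset.sum_congr rfl fun a _ => Finset.sum_congr rfl fun b _ => ?_
        rw [ite_zero_mul_ite_zero]

lemma hom_apply_eq_zero {d : ℕ} {p : FreeStarAlg g} (hp : IsHom d p) {w : FreeMonoid (X g)}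
    (hw : (toList w).length ≠ d) : p w = 0 := by
  by_contra hc
  exact hw (hp w (Finsupp.mem_support_iff.2 hc))

lemma bound_apply_eq_zero {K : ℕ} {f : FreeStarAlg g}
    (hf : ∀ w ∈ f.coeff.support, (toList w).length ≤ K) {w : FreeMonoid (X g)}
    (hw : K < (toList w).length) : f w = 0 := by
  by_contra hc
  exact absurd (hf w (Finsupp.mem_support_iff.2 hc)) (by omega)

lemma mul_hom_apply {d : ℕ} {p : FreeStarAlg g} (hp : IsHom d p) (f : FreeStarAlg g)
    (z : FreeMonoid (X g)) :
    (f * p) z = f (ofList ((toList z).take ((toList z).length - d))) *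
                p (ofList ((toList z).drop ((toList z).length - d))) := by
  rw [mul_apply_splits]
  rcases le_or_gt d (toList z).length with hdn | hdn
  · apply Finset.sum_eq_single_of_mem _ (Finset.mem_range.2 (by omega))
    intro j hj hne
    have hz : p (ofList ((toList z).drop j)) = 0 := by
      apply hom_apply_eq_zero hp
      rw [toList_ofList, List.length_drop]
      have := Finset.mem_range.1 hj
      omega
    rw [hz, mul_zero]
  · have h0 : (toList z).length - d = 0 := by omega
    rw [h0]
    have hz : p (ofList ((toList z).drop 0)) = 0 := by
      apply hom_apply_eq_zero hp
      rw [toList_ofList, List.length_drop]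
      omega
    rw [hz, mul_zero]
    apply Finset.sum_eq_zero
    intro j hj
    have hz : p (ofList ((toList z).drop j)) = 0 := by
      apply hom_apply_eq_zero hp
      rw [toList_ofList, List.length_drop]
      omega
    rw [hz, mul_zero]

lemma hom_mul_apply {d : ℕ} {p : FreeStarAlg g} (hp : IsHom d p) (f : FreeStarAlg g)
    (z : FreeMonoid (X g)) :
    (p * f) z = p (ofList ((toList z).take d)) * f (ofList ((toList z).drop d)) := by
  rw [mul_apply_splits]
  rcases le_or_gt d (toList z).length with hdn | hdn
  · apply Finset.sum_eq_single_of_mem _ (Finset.mem_range.2 (by omega))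
    intro j hj hne
    have hz : p (ofList ((toList z).take j)) = 0 := by
      apply hom_apply_eq_zero hp
      rw [toList_ofList, List.length_take]
      have := Finset.mem_range.1 hj
      omega
    rw [hz, zero_mul]
  · have hz : p (ofList ((toList z).take d)) = 0 := by
      apply hom_apply_eq_zero hp
      rw [toList_ofList, List.length_take]
      omega
    rw [hz, zero_mul]
    apply Finset.sum_eq_zero
    intro j hj
    have hz : p (ofList ((toList z).take j)) = 0 := by
      apply hom_apply_eq_zero hp
      rw [toList_ofList, List.length_take]
      have := Finset.mem_range.1 hj
      omega
    rw [hz, zero_mul]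

lemma sandwich_apply {K : ℕ} {f h : FreeStarAlg g}
    (hf : ∀ w ∈ f.coeff.support, (toList w).length ≤ K)
    (hh : ∀ w ∈ h.coeff.support, (toList w).length ≤ K)
    (z : FreeMonoid (X g)) (hz : (toList z).length = K + K) :
    (f * h) z = f (ofList ((toList z).take K)) * h (ofList ((toList z).drop K)) := by
  rw [mul_apply_splits]
  apply Finset.sum_eq_single_of_mem _ (Finset.mem_range.2 (by omega))
  intro j hj hne
  have hj' := Finset.mem_range.1 hj
  rcases lt_or_gt_of_ne hne with hlt | hgt
  · have : h (ofList ((toList z).drop j)) = 0 := by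
      apply bound_apply_eq_zero hh
      rw [toList_ofList, List.length_drop]
      omega
    rw [this, mul_zero]
  · have : f (ofList ((toList z).take j)) = 0 := by
      apply bound_apply_eq_zero hf
      rw [toList_ofList, List.length_take]
      omega
    rw [this, zero_mul]

lemma bound_starP {K : ℕ} {f : FreeStarAlg g}
    (hf : ∀ w ∈ f.coeff.support, (toList w).length ≤ K) :
    ∀ w ∈ (starP f).coeff.support, (toList w).length ≤ K := by
  intro w hw
  rw [Finsupp.mem_support_iff, starP_apply] at hw
  have := hf _ (Finsupp.mem_support_iff.2 hw)
  rw [length_starWord] at this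
  exact this

end Stmt8Aux

namespace Stmt8Aux

open FreeStarAlg FreeMonoid

variable {g : ℕ}

lemma rev_take {α : Type*} (m : List α) {j : ℕ} (hj : j ≤ m.length) :
    m.reverse.take j = (m.drop (m.length - j)).reverse := by
  rw [List.reverse_drop]
  congr 1
  omega

lemma rev_drop {α : Type*} (m : List α) {j : ℕ} (hj : j ≤ m.length) :
    m.reverse.drop j = (m.take (m.length - j)).reverse := by
  rw [List.reverse_take]
  congr 1
  omega

lemma IsHom_starP {d : ℕ} {p : FreeStarAlg g} (hp : IsHom d p) : IsHom d (starP p) := by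
  intro w hw
  rw [Finsupp.mem_support_iff, starP_apply] at hw
  have := hp _ (Finsupp.mem_support_iff.2 hw)
  rw [length_starWord] at this
  exact this

lemma hom_mul_hom {e d : ℕ} {q p : FreeStarAlg g} (hq : IsHom e q) (hp : IsHom d p) :
    IsHom (e + d) (q * p) := by
  intro w hw
  rw [Finsupp.mem_support_iff, mul_hom_apply hp q w] at hw
  have h1 : q (ofList ((toList w).take ((toList w).length - d))) ≠ 0 := fun hc => hw (by rw [hc, zero_mul])
  have h2 : p (ofList ((toList w).drop ((toList w).length - d))) ≠ 0 := fun hc => hw (by rw [hc, mul_zero])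
  have e1 := hq _ (Finsupp.mem_support_iff.2 h1)
  have e2 := hp _ (Finsupp.mem_support_iff.2 h2)
  rw [toList_ofList, List.length_take] at e1
  rw [toList_ofList, List.length_drop] at e2
  omega

lemma toList_z (l₁ l₂ : List (X g)) :
    toList (starWord (ofList l₁) * ofList l₂) = (l₁.map Sum.swap).reverse ++ l₂ := by
  simp

lemma Sval {K r : ℕ} {a : Fin r → FreeStarAlg g}
    (ha : ∀ i, ∀ w ∈ (a i).coeff.support, (toList w).length ≤ K)
    {l₁ l₂ : List (X g)} (h₁ : l₁.length = K) (h₂ : l₂.length = K) :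
    (∑ i, starP (a i) * a i) (starWord (ofList l₁) * ofList l₂)
      = ∑ i, a i (ofList l₁) * a i (ofList l₂) := by
  rw [MonoidAlgebra.coeff_sum, Finsupp.finset_sum_apply]
  refine Finset.sum_congr rfl fun i _ => ?_
  have hlen : (l₁.map Sum.swap).reverse.length = K := by simp [h₁]
  have hz : (toList (starWord (ofList l₁) * ofList l₂)).length = K + K := by
    rw [toList_z, List.length_append, hlen, h₂]
  rw [sandwich_apply (bound_starP (ha i)) (ha i) _ hz]
  congr 1
  · have : (toList (starWord (ofList l₁) * ofList l₂)).take K = (l₁.map Sum.swap).reverse := by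
      rw [toList_z, ← hlen, List.take_left]
    rw [this]
    have : ofList ((l₁.map Sum.swap).reverse) = starWord (ofList l₁) := by
      apply FreeMonoid.toList.injective; simp
    rw [this, starP_apply, starWord_starWord]
  · congr 1
    rw [toList_z, ← hlen, List.drop_left]

section Forbidden

variable {d : ℕ} {p : FreeStarAlg g} (hp : IsHom d p)
  (hforb : ∀ w ∈ p.coeff.support, ¬ ∃ (u v : FreeMonoid (Fin g ⊕ Fin g)) (l : Fin g ⊕ Fin g),
      w = u * (FreeMonoid.of l * FreeMonoid.of (Sum.swap l)) * v)

include hforb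

lemma p_pair_zero (u v : List (X g)) (x : X g) :
    p (ofList (u ++ Sum.swap x :: x :: v)) = 0 := by
  rw [← Finsupp.notMem_support_iff]
  intro hw
  refine hforb _ hw ⟨ofList u, ofList v, Sum.swap x, ?_⟩
  apply FreeMonoid.toList.injective
  simp [Sum.swap_swap]

lemma shape_zero {t : ℕ} (ht : 1 ≤ t) (x : X g) (r' : List (X g)) :
    p (ofList ((List.take t ((x :: r').map Sum.swap)).reverse ++ (x :: r'))) = 0 := by
  obtain ⟨t', rfl⟩ : ∃ t', t = t' + 1 := ⟨t - 1, by omega⟩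
  rw [List.map_cons, List.take_succ_cons, List.reverse_cons, List.append_assoc,
    List.singleton_append]
  exact p_pair_zero hforb _ _ x

end Forbidden

lemma traceCase {d K r : ℕ} {p : FreeStarAlg g} (hp : IsHom d p)
    (hforb : ∀ w ∈ p.coeff.support, ¬ ∃ (u v : FreeMonoid (Fin g ⊕ Fin g)) (l : Fin g ⊕ Fin g),
        w = u * (FreeMonoid.of l * FreeMonoid.of (Sum.swap l)) * v)
    (hdK : K < d) {a : Fin r → FreeStarAlg g}
    (ha : ∀ i, ∀ w ∈ (a i).coeff.support, (toList w).length ≤ K)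
    {b c₂ : FreeStarAlg g}
    (heq : ∑ i, starP (a i) * a i = b * p + starP p * c₂) :
    ∀ i, ∀ w : FreeMonoid (X g), (toList w).length = K → a i w = 0 := by
  have key : ∀ l : List (X g), l.length = K →
      ∑ i, a i (ofList l) * a i (ofList l) = 0 := by
    intro l hl
    have hz := Sval ha hl hl
    rw [heq] at hz
    rw [← hz]
    set z := starWord (ofList l) * ofList l with hzdef
    have hlen : (l.map Sum.swap).reverse.length = K := by simp [hl]
    have hzl : toList z = (l.map Sum.swap).reverse ++ l := toList_z l l
    have hzlen : (toList z).length = K + K := by rw [hzl, List.length_append, hlen, hl]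
    -- first term is zero
    have hterm1 : p (ofList ((toList z).drop ((toList z).length - d))) = 0 := by
      rcases Nat.eq_zero_or_pos K with hK0 | hKpos
      · apply hom_apply_eq_zero hp
        rw [toList_ofList, List.length_drop]
        omega
      · obtain ⟨x, r', rfl⟩ : ∃ x r', l = x :: r' := by
          cases l with
          | nil => simp at hl; omega
          | cons x r' => exact ⟨x, r', rfl⟩
        have hj : (toList z).length - d ≤ ((x :: r').map Sum.swap).reverse.length := by
          rw [hlen]; omega
        rw [hzlen, hzl, List.drop_append_of_le_length (by rw [hlen]; omega)]
        rw [rev_drop _ (by rw [List.length_map, hl]; omega)]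
        have hlm : ((x :: r').map Sum.swap).length = K := by rw [List.length_map, hl]
        rw [hlm]
        exact shape_zero hforb (by omega) x r'
    have hterm2 : p (starWord (ofList ((toList z).take d))) = 0 := by
      have htake : (toList z).take d = (l.map Sum.swap).reverse ++ l.take (d - K) := by
        rw [hzl]
        conv_lhs => rw [show d = (l.map Sum.swap).reverse.length + (d - K) from by
          rw [hlen]; omega]
        rw [List.take_append, List.take_of_length_le (by omega), Nat.add_sub_cancel_left]
      rw [htake]
      have hsw : starWord (ofList ((l.map Sum.swap).reverse ++ l.take (d - K)))
          = ofList ((List.take (d - K) (l.map Sum.swap)).reverse ++ l) := by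
        apply FreeMonoid.toList.injective
        simp [List.map_reverse, List.map_take, List.map_map, Function.comp, List.map_id]
      rw [hsw]
      rcases Nat.eq_zero_or_pos K with hK0 | hKpos
      · apply hom_apply_eq_zero hp
        subst hK0
        have : l = [] := List.length_eq_zero_iff.mp hl
        subst this
        simp
        omega
      · obtain ⟨x, r', rfl⟩ : ∃ x r', l = x :: r' := by
          cases l with
          | nil => simp at hl; omega
          | cons x r' => exact ⟨x, r', rfl⟩
        exact shape_zero hforb (by omega) x r'
    rw [MonoidAlgebra.coeff_add, Finsupp.add_apply, mul_hom_apply hp b z, hom_mul_apply (IsHom_starP hp) c₂ z,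
      hterm1, mul_zero, starP_apply, hterm2, zero_mul, add_zero]
  intro i w hw
  have h0 := key (toList w) hw
  have hnn : ∀ j ∈ (Finset.univ : Finset (Fin r)), 0 ≤ a j (ofList (toList w)) * a j (ofList (toList w)) :=
    fun j _ => mul_self_nonneg _
  have := (Finset.sum_eq_zero_iff_of_nonneg hnn).1 h0 i (Finset.mem_univ i)
  rw [ofList_toList] at this
  exact mul_self_eq_zero.1 this

end Stmt8Aux

namespace Stmt8Aux

open FreeStarAlg FreeMonoid

variable {g : ℕ}

/-- take the first `K-d` letters of a length-`K` vector. -/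
def tkV (K d : ℕ) (w : List.Vector (X g) K) : List.Vector (X g) (K - d) :=
  ⟨w.1.take (K - d), by rw [List.length_take, w.2]; exact Nat.min_eq_left (Nat.sub_le K d)⟩

@[simp] lemma tkV_val (K d : ℕ) (w : List.Vector (X g) K) :
    (tkV K d w).1 = w.1.take (K - d) := rfl

/-- The linear map whose range is (the degree-K part of) the left ideal generated by `p`. -/
def Tmap (p : FreeStarAlg g) (K d : ℕ) :
    (List.Vector (X g) (K - d) → ℝ) →ₗ[ℝ] EuclideanSpace ℝ (List.Vector (X g) K) where
  toFun D := WithLp.toLp 2 (fun w => D (tkV K d w) * p (ofList (w.1.drop (K - d))))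
  map_add' x y := by ext w; simp [add_mul]
  map_smul' c x := by ext w; simp [mul_assoc]

@[simp] lemma Tmap_apply (p : FreeStarAlg g) (K d : ℕ) (D : List.Vector (X g) (K - d) → ℝ)
    (w : List.Vector (X g) K) :
    Tmap p K d D w = D (tkV K d w) * p (ofList (w.1.drop (K - d))) := rfl

lemma coeff_identity {d K r : ℕ} {p : FreeStarAlg g} (hp : IsHom d p) (hdK : d ≤ K)
    {a : Fin r → FreeStarAlg g} (ha : ∀ i, ∀ w ∈ (a i).coeff.support, (toList w).length ≤ K)
    {b c₂ : FreeStarAlg g} (heq : ∑ i, starP (a i) * a i = b * p + starP p * c₂)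
    {l₁ l₂ : List (X g)} (h₁ : l₁.length = K) (h₂ : l₂.length = K) :
    ∑ i, a i (ofList l₁) * a i (ofList l₂)
      = b (starWord (ofList l₁) * ofList (l₂.take (K - d))) * p (ofList (l₂.drop (K - d)))
        + p (ofList (l₁.drop (K - d)))
          * c₂ (starWord (ofList (l₁.take (K - d))) * ofList l₂) := by
  have hS := Sval ha h₁ h₂
  rw [heq] at hS
  rw [← hS]
  set z := starWord (ofList l₁) * ofList l₂ with hzdef
  have hlen : (l₁.map Sum.swap).reverse.length = K := by simp [h₁]
  have hzl : toList z = (l₁.map Sum.swap).reverse ++ l₂ := toList_z l₁ l₂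
  have hzlen : (toList z).length = K + K := by rw [hzl, List.length_append, hlen, h₂]
  rw [MonoidAlgebra.coeff_add, Finsupp.add_apply, mul_hom_apply hp b z, hom_mul_apply (IsHom_starP hp) c₂ z]
  congr 1
  · congr 1
    · congr 1
      rw [hzlen, hzl]
      conv_lhs => rw [show K + K - d = (l₁.map Sum.swap).reverse.length + (K - d) from by
        rw [hlen]; omega]
      rw [List.take_append]
      apply FreeMonoid.toList.injective
      simp
    · congr 1
      rw [hzlen, hzl]
      conv_lhs => rw [show K + K - d = (l₁.map Sum.swap).reverse.length + (K - d) from by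
        rw [hlen]; omega]
      rw [List.drop_append, List.drop_eq_nil_of_le (by omega), List.nil_append,
        Nat.add_sub_cancel_left]
  · congr 1
    · rw [starP_apply]
      congr 1
      rw [hzl, List.take_append_of_le_length (by rw [hlen]; omega)]
      apply FreeMonoid.toList.injective
      rw [toList_starWord, toList_ofList, toList_ofList]
      have e1 : (l₁.map Sum.swap).reverse.take d
          = ((l₁.map Sum.swap).drop (K - d)).reverse := by
        rw [rev_take _ (by simp [h₁]; omega)]
        congr 1
        simp [h₁]
      rw [e1]
      simp [List.map_reverse, List.map_drop, List.map_map, Sum.swap_swap_eq]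
    · congr 1
      rw [hzl, List.drop_append_of_le_length (by rw [hlen]; omega)]
      apply FreeMonoid.toList.injective
      rw [toList_mul, toList_starWord, toList_ofList, toList_ofList, toList_ofList]
      have e2 : (l₁.map Sum.swap).reverse.drop d
          = ((l₁.map Sum.swap).take (K - d)).reverse := by
        rw [rev_drop _ (by simp [h₁]; omega)]
        congr 1
        simp [h₁]
      rw [e2, List.map_take]

lemma euclidCase {d K r : ℕ} {p : FreeStarAlg g} (hp : IsHom d p) (hdK : d ≤ K)
    {a : Fin r → FreeStarAlg g} (ha : ∀ i, ∀ w ∈ (a i).coeff.support, (toList w).length ≤ K)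
    {b c₂ : FreeStarAlg g} (heq : ∑ i, starP (a i) * a i = b * p + starP p * c₂) :
    ∀ i, ∃ Di : FreeStarAlg g, IsHom (K - d) Di ∧
      ∀ w : FreeMonoid (X g), (toList w).length = K → a i w = (Di * p) w := by
  classical
  set VK := List.Vector (X g) K
  set U : Submodule ℝ (EuclideanSpace ℝ VK) := LinearMap.range (Tmap p K d) with hU
  set α : Fin r → EuclideanSpace ℝ VK :=
    (fun i => WithLp.toLp 2 (fun w => a i (ofList w.1))) with hα
  -- Step 1: orthogonality
  have horto : ∀ lam : EuclideanSpace ℝ VK, lam ∈ Uᗮ → ∀ i, (inner ℝ (α i) lam : ℝ) = 0 := by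
    intro lam hlam
    have hT : ∀ D : List.Vector (X g) (K - d) → ℝ,
        ∑ w : VK, D (tkV K d w) * p (ofList (w.1.drop (K - d))) * lam w = 0 := by
      intro D
      have hm := (Submodule.mem_orthogonal _ lam).1 hlam (Tmap p K d D)
        (LinearMap.mem_range_self _ D)
      rw [PiLp.inner_apply] at hm
      simp [RCLike.inner_apply, Tmap_apply] at hm
      rw [← hm]; exact Finset.sum_congr rfl fun w _ => by ring
    set s : Fin r → ℝ := fun i => ∑ w : VK, a i (ofList w.1) * lam w with hs
    have hQ1 : ∑ w₁ : VK, ∑ w₂ : VK,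
        (lam w₁ * lam w₂ * ∑ i, a i (ofList w₁.1) * a i (ofList w₂.1))
        = ∑ i, s i * s i := by
      calc ∑ w₁ : VK, ∑ w₂ : VK,
            (lam w₁ * lam w₂ * ∑ i, a i (ofList w₁.1) * a i (ofList w₂.1))
          = ∑ w₁ : VK, ∑ w₂ : VK, ∑ i,
            (a i (ofList w₁.1) * lam w₁) * (a i (ofList w₂.1) * lam w₂) := by
            refine Finset.sum_congr rfl fun w₁ _ => Finset.sum_congr rfl fun w₂ _ => ?_
            rw [Finset.mul_sum]
            exact Finset.sum_congr rfl fun i _ => by ring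
        _ = ∑ w₁ : VK, ∑ i, ∑ w₂ : VK,
            (a i (ofList w₁.1) * lam w₁) * (a i (ofList w₂.1) * lam w₂) :=
            Finset.sum_congr rfl fun w₁ _ => Finset.sum_comm
        _ = ∑ i, ∑ w₁ : VK, ∑ w₂ : VK,
            (a i (ofList w₁.1) * lam w₁) * (a i (ofList w₂.1) * lam w₂) :=
            Finset.sum_comm
        _ = ∑ i, s i * s i := by
            refine Finset.sum_congr rfl fun i _ => ?_
            rw [hs]
            exact (Finset.sum_mul_sum _ _ _ _).symm
    have hQ0 : ∑ w₁ : VK, ∑ w₂ : VK,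
        (lam w₁ * lam w₂ * ∑ i, a i (ofList w₁.1) * a i (ofList w₂.1)) = 0 := by
      have hco : ∀ w₁ w₂ : VK,
          lam w₁ * lam w₂ * ∑ i, a i (ofList w₁.1) * a i (ofList w₂.1)
          = lam w₁ * lam w₂ *
              (b (starWord (ofList w₁.1) * ofList (w₂.1.take (K - d)))
                * p (ofList (w₂.1.drop (K - d))))
            + lam w₁ * lam w₂ *
              (p (ofList (w₁.1.drop (K - d)))
                * c₂ (starWord (ofList (w₁.1.take (K - d))) * ofList w₂.1)) := by
        intro w₁ w₂
        rw [coeff_identity hp hdK ha heq w₁.2 w₂.2, mul_add]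
      calc ∑ w₁ : VK, ∑ w₂ : VK,
            (lam w₁ * lam w₂ * ∑ i, a i (ofList w₁.1) * a i (ofList w₂.1))
          = (∑ w₁ : VK, ∑ w₂ : VK, lam w₁ * lam w₂ *
              (b (starWord (ofList w₁.1) * ofList (w₂.1.take (K - d)))
                * p (ofList (w₂.1.drop (K - d)))))
            + ∑ w₁ : VK, ∑ w₂ : VK, lam w₁ * lam w₂ *
              (p (ofList (w₁.1.drop (K - d)))
                * c₂ (starWord (ofList (w₁.1.take (K - d))) * ofList w₂.1)) := by
            rw [← Finset.sum_add_distrib]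
            refine Finset.sum_congr rfl fun w₁ _ => ?_
            rw [← Finset.sum_add_distrib]
            exact Finset.sum_congr rfl fun w₂ _ => hco w₁ w₂
        _ = 0 := by
            rw [show (0:ℝ) = 0 + 0 from by ring]
            congr 1
            · apply Finset.sum_eq_zero
              intro w₁ _
              have h := hT (fun u => lam w₁ * b (starWord (ofList w₁.1) * ofList u.1))
              rw [← h]
              refine Finset.sum_congr rfl fun w₂ _ => ?_
              simp only [tkV_val]
              ring
            · rw [Finset.sum_comm]
              apply Finset.sum_eq_zero
              intro w₂ _
              have h := hT (fun u => lam w₂ * c₂ (starWord (ofList u.1) * ofList w₂.1))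
              rw [← h]
              refine Finset.sum_congr rfl fun w₁ _ => ?_
              simp only [tkV_val]
              ring
    have hs0 : ∀ i, s i = 0 := by
      intro i
      have h0 : ∑ i, s i * s i = 0 := by rw [← hQ1, hQ0]
      have := (Finset.sum_eq_zero_iff_of_nonneg
        (fun j _ => mul_self_nonneg (s j))).1 h0 i (Finset.mem_univ i)
      exact mul_self_eq_zero.1 this
    intro i
    rw [PiLp.inner_apply]
    simp [RCLike.inner_apply, hα]
    rw [← hs0 i]; exact Finset.sum_congr rfl fun w _ => by ring
  -- Step 2: membership
  intro i
  have hmemU : α i ∈ U := by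
    rw [← Submodule.orthogonal_orthogonal U]
    refine (Submodule.mem_orthogonal _ _).2 fun y hy => ?_
    rw [real_inner_comm]
    exact horto y hy i
  obtain ⟨Dt, hDt⟩ := hmemU
  -- Step 3: build the polynomial
  set Di : FreeStarAlg g :=
    ∑ u : List.Vector (X g) (K - d), MonoidAlgebra.single (ofList u.1) (Dt u) with hDidef
  have hDapply : ∀ u₀ : List.Vector (X g) (K - d), Di (ofList u₀.1) = Dt u₀ := by
    intro u₀
    rw [hDidef, MonoidAlgebra.coeff_sum, Finsupp.finset_sum_apply]
    calc ∑ u : List.Vector (X g) (K - d),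
          (MonoidAlgebra.single (ofList u.1) (Dt u)) (ofList u₀.1)
        = ∑ u : List.Vector (X g) (K - d), if u = u₀ then Dt u else 0 := by
          refine Finset.sum_congr rfl fun u _ => ?_
          rw [MonoidAlgebra.coeff_single, Finsupp.single_apply]
          by_cases h : u = u₀
          · subst h; simp
          · rw [if_neg h, if_neg]
            intro hc
            apply h
            apply List.Vector.eq
            have := congrArg toList hc
            exact (by simpa using this : u.1 = u₀.1)
      _ = Dt u₀ := by rw [Finset.sum_ite_eq' Finset.univ u₀ Dt]; simp
  refine ⟨Di, ?_, ?_⟩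
  · intro w hw
    rw [hDidef, MonoidAlgebra.coeff_sum] at hw
    obtain ⟨u, -, hwu⟩ := Finsupp.mem_support_finset_sum w hw
    have := Finsupp.support_single_subset hwu
    rw [Finset.mem_singleton] at this
    subst this
    rw [toList_ofList, u.2]
  · intro w hw
    set wV : VK := (⟨toList w, hw⟩ : List.Vector (X g) K) with hwV
    calc a i w = a i (ofList (toList w)) := by rw [ofList_toList]
      _ = Tmap p K d Dt wV := by rw [hDt]
      _ = Dt (tkV K d wV) * p (ofList ((toList w).drop (K - d))) := rfl
      _ = Di (ofList ((toList w).take (K - d))) * p (ofList ((toList w).drop (K - d))) := by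
          rw [show Di (ofList ((toList w).take (K - d))) = Dt (tkV K d wV) from
            hDapply (tkV K d wV)]
      _ = (Di * p) w := by
          rw [mul_hom_apply hp Di w, hw]

end Stmt8Aux

namespace Stmt8Aux

open FreeStarAlg FreeMonoid

variable {g : ℕ}

lemma keyStep {d K r : ℕ} {p : FreeStarAlg g} (hp : IsHom d p)
    (hforb : ∀ w ∈ p.coeff.support, ¬ ∃ (u v : FreeMonoid (Fin g ⊕ Fin g)) (l : Fin g ⊕ Fin g),
        w = u * (FreeMonoid.of l * FreeMonoid.of (Sum.swap l)) * v)
    {a : Fin r → FreeStarAlg g} (ha : ∀ i, ∀ w ∈ (a i).coeff.support, (toList w).length ≤ K)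
    {b c₂ : FreeStarAlg g} (heq : ∑ i, starP (a i) * a i = b * p + starP p * c₂) :
    ∀ i, ∃ Di : FreeStarAlg g, IsHom K (Di * p) ∧
      ∀ w : FreeMonoid (X g), (toList w).length = K → a i w = (Di * p) w := by
  intro i
  rcases le_or_gt d K with hdK | hdK
  · obtain ⟨Di, hhom, heval⟩ := euclidCase hp hdK ha heq i
    refine ⟨Di, ?_, heval⟩
    have := hom_mul_hom hhom hp
    rwa [Nat.sub_add_cancel hdK] at this
  · refine ⟨0, ?_, ?_⟩
    · intro w hw
      rw [zero_mul] at hw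
      simp at hw
    · intro w hw
      rw [zero_mul, traceCase hp hforb hdK ha heq i w hw]
      simp

end Stmt8Aux

open Stmt8Aux in
theorem stmt8' {g d : ℕ} (p : FreeStarAlg g) (hp : IsHom d p)
    (h : ∀ w ∈ p.coeff.support, ¬ ∃ (u v : FreeMonoid (Fin g ⊕ Fin g)) (l : Fin g ⊕ Fin g),
        w = u * (FreeMonoid.of l * FreeMonoid.of (Sum.swap l)) * v) :
    IsRealIdeal (leftIdealGen {p}) := by
  intro r₀ a₀ hmem₀
  have main : ∀ (K r : ℕ) (a : Fin r → FreeStarAlg g),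
      (∀ i, ∀ w ∈ (a i).coeff.support, (FreeMonoid.toList w).length < K) →
      MemIplusIstar (leftIdealGen {p}) (∑ i, starP (a i) * a i) →
      ∀ i, a i ∈ leftIdealGen {p} := by
    intro K
    induction K with
    | zero =>
      intro r a hb _ i
      have hz : a i = 0 := by
        ext w
        rw [MonoidAlgebra.coeff_zero, Finsupp.coe_zero, Pi.zero_apply]
        by_contra hc
        exact absurd (hb i w (Finsupp.mem_support_iff.2 hc)) (by omega)
      rw [hz]
      exact Submodule.zero_mem _
    | succ K ih =>
      intro r a hb hmem i
      obtain ⟨u, hu, v, hv, hsum⟩ := hmem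
      obtain ⟨bb, hbb⟩ := Submodule.mem_span_singleton.1 hu
      obtain ⟨cc, hcc⟩ := Submodule.mem_span_singleton.1 hv
      have heq : ∑ j, starP (a j) * a j = bb * p + starP p * starP cc := by
        rw [hsum, ← hbb, ← hcc, smul_eq_mul, smul_eq_mul, starP_mul]
      have hble : ∀ j, ∀ w ∈ (a j).coeff.support, (FreeMonoid.toList w).length ≤ K :=
        fun j w hw => Nat.lt_succ_iff.1 (hb j w hw)
      have hkey := keyStep hp h hble heq
      choose D hDhom hDeval using hkey
      set a' : Fin r → FreeStarAlg g := fun j => a j - D j * p with ha'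
      have hb' : ∀ j, ∀ w ∈ (a' j).coeff.support, (FreeMonoid.toList w).length < K := by
        intro j w hw
        rw [Finsupp.mem_support_iff] at hw
        by_contra hc
        push_neg at hc
        apply hw
        have hval : a' j w = a j w - (D j * p) w := by rw [ha']; exact Finsupp.sub_apply _ _ _
        rcases eq_or_lt_of_le hc with hK | hK
        · rw [hval, ← hDeval j w hK.symm, sub_self]
        · rw [hval, bound_apply_eq_zero (hble j) hK,
            hom_apply_eq_zero (hDhom j) (by omega), sub_zero]
      have hmem' : MemIplusIstar (leftIdealGen {p}) (∑ j, starP (a' j) * a' j) := by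
        refine ⟨u + (∑ j, (starP (D j * p) - starP (a j)) * D j) * p,
          Submodule.add_mem _ hu (Submodule.mem_span_singleton.2
            ⟨∑ j, (starP (D j * p) - starP (a j)) * D j, by rw [smul_eq_mul]⟩),
          v - (∑ j, starP (a j) * D j) * p,
          Submodule.sub_mem _ hv (Submodule.mem_span_singleton.2
            ⟨∑ j, starP (a j) * D j, by rw [smul_eq_mul]⟩), ?_⟩
        have expand : ∀ j, starP (a' j) * a' j
            = starP (a j) * a j - starP (a j) * (D j * p) - starP (D j * p) * a j
              + starP (D j * p) * (D j * p) := by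
          intro j
          rw [ha']
          simp only [starP_sub]
          noncomm_ring
        have hL : ∑ j, starP (a' j) * a' j
            = ∑ j, starP (a j) * a j - (∑ j, starP (a j) * (D j * p))
              - (∑ j, starP (D j * p) * a j) + ∑ j, starP (D j * p) * (D j * p) := by
          calc ∑ j, starP (a' j) * a' j
              = ∑ j, (starP (a j) * a j - starP (a j) * (D j * p) - starP (D j * p) * a j
                  + starP (D j * p) * (D j * p)) := Finset.sum_congr rfl fun j _ => expand j
            _ = _ := by
                rw [Finset.sum_add_distrib, Finset.sum_sub_distrib, Finset.sum_sub_distrib]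
        have hA : (∑ j, (starP (D j * p) - starP (a j)) * D j) * p
            = ∑ j, starP (D j * p) * (D j * p) - ∑ j, starP (a j) * (D j * p) := by
          rw [Finset.sum_mul, ← Finset.sum_sub_distrib]
          exact Finset.sum_congr rfl fun j _ => by noncomm_ring
        have hB : starP ((∑ j, starP (a j) * D j) * p) = ∑ j, starP (D j * p) * a j := by
          rw [starP_mul, starP_sum, Finset.mul_sum]
          exact Finset.sum_congr rfl fun j _ => by
            rw [starP_mul, starP_starP, ← mul_assoc, ← starP_mul]
        rw [hL, hsum, starP_sub, hA, hB]
        abel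
      have hmemI : ∀ j, a' j ∈ leftIdealGen {p} := ih r a' hb' hmem'
      have : a i = a' i + D i * p := by rw [ha']; simp
      rw [this]
      exact Submodule.add_mem _ (hmemI i)
        (Submodule.mem_span_singleton.2 ⟨D i, by rw [smul_eq_mul]⟩)
  refine main ((Finset.univ.sup fun i => deg (a₀ i)) + 1) r₀ a₀ ?_ hmem₀
  intro i w hw
  have h1 : (FreeMonoid.toList w).length ≤ deg (a₀ i) := Finset.le_sup hw
  have h2 : deg (a₀ i) ≤ Finset.univ.sup fun i => deg (a₀ i) :=
    Finset.le_sup (f := fun i => deg (a₀ i)) (Finset.mem_univ i)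
  omega


/-- If `p` is homogeneous and no word of `p` contains a factor
`xᵢ xᵢ*` or `xᵢ* xᵢ`, then the left ideal generated by `p` is real. -/
theorem stmt8 {g d : ℕ} (p : FreeStarAlg g) (hp : IsHom d p)
    (h : ∀ w ∈ p.coeff.support, ¬ ∃ (u v : FreeMonoid (Fin g ⊕ Fin g)) (l : Fin g ⊕ Fin g),
        w = u * (FreeMonoid.of l * FreeMonoid.of (Sum.swap l)) * v) :
    IsRealIdeal (leftIdealGen {p}) :=
  stmt8' p hp h
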